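/- arXiv:2010.06037 — 2 statements merged into one kernel-verified Lean document; each statement's English description precedes it below -/
import Mathlib

section
/- If D is an unambiguous ECS, then for every node v, the number of full output trees rooted at v equals |L_D(v)|; i.e., the print function is a bijection from full output trees rooted at v to L_D(v). -/
/-- Labels of ECS nodes: an alphabet symbol (leaf), a union node, or a product node. -/
inductive ECSLabel (S : Type*)
  | sym (a : S)
  | union
  | prod

/-- A label is an inner label if it is `union` or `prod`. -/
def ECSLabel.isInner {S : Type*} : ECSLabel S → Prop
  | .sym _ => False
  | .union => True
  | .prod => True

/-- An Enumerable Compact Set (ECS): a DAG over the node type `V`, with leaves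
labeled by alphabet symbols and inner nodes labeled `∪` or `⊙` with left and right
children.  Acyclicity is witnessed by a rank function decreasing along edges. -/
structure ECS (S V : Type*) where
  label : V → ECSLabel S
  l : V → V
  r : V → V
  rank : V → ℕ
  rank_l : ∀ v, (label v).isInner → rank (l v) < rank v
  rank_r : ∀ v, (label v).isInner → rank (r v) < rank v

namespace ECS

variable {S V : Type*}

/-- `D.Lang v w`: the word `w` belongs to the set `L_D(v)` represented at node `v`. -/
inductive Lang (D : ECS S V) : V → List S → Prop
  | sym {v : V} {a : S} : D.label v = ECSLabel.sym a → Lang D v [a]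
  | unionL {v : V} {w : List S} : D.label v = ECSLabel.union →
      Lang D (D.l v) w → Lang D v w
  | unionR {v : V} {w : List S} : D.label v = ECSLabel.union →
      Lang D (D.r v) w → Lang D v w
  | prod {v : V} {w₁ w₂ : List S} : D.label v = ECSLabel.prod →
      Lang D (D.l v) w₁ → Lang D (D.r v) w₂ → Lang D v (w₁ ++ w₂)

end ECS

/-- Output trees over the node type `V` of an ECS. -/
inductive OTree (V : Type*)
  | leaf (v : V)
  | un (v : V) (t : OTree V)
  | pr (v : V) (t₁ t₂ : OTree V)

namespace OTree

variable {V : Type*}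

/-- The root node of an output tree. -/
def root : OTree V → V
  | .leaf v => v
  | .un v _ => v
  | .pr v _ _ => v

/-- The number of nodes of an output tree. -/
def size : OTree V → ℕ
  | .leaf _ => 1
  | .un _ t => t.size + 1
  | .pr _ t₁ t₂ => t₁.size + t₂.size + 1

end OTree

namespace ECS

variable {S V : Type*}

/-- Full output trees of an ECS `D`: leaves sit at leaf nodes, a union node has one
child rooted at its left or right child, and a product node has two children rooted
at its left and right children respectively. -/
inductive Full (D : ECS S V) : OTree V → Prop
  | leaf {v : V} {a : S} : D.label v = ECSLabel.sym a → Full D (.leaf v)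
  | un {v : V} {t : OTree V} : D.label v = ECSLabel.union →
      (t.root = D.l v ∨ t.root = D.r v) → Full D t → Full D (.un v t)
  | pr {v : V} {t₁ t₂ : OTree V} : D.label v = ECSLabel.prod →
      t₁.root = D.l v → t₂.root = D.r v → Full D t₁ → Full D t₂ →
      Full D (.pr v t₁ t₂)

/-- The word printed by an output tree. -/
def print (D : ECS S V) : OTree V → List S
  | .leaf v => match D.label v with | .sym a => [a] | _ => []
  | .un _ t => D.print t
  | .pr _ t₁ t₂ => D.print t₁ ++ D.print t₂

/-- An ECS is unambiguous: the two branches of a union node are disjoint, and words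
at product nodes decompose uniquely. -/
def Unambiguous (D : ECS S V) : Prop :=
  (∀ v, D.label v = ECSLabel.union →
    ∀ w, ¬ (D.Lang (D.l v) w ∧ D.Lang (D.r v) w)) ∧
  (∀ v, D.label v = ECSLabel.prod →
    ∀ w₁ w₂ w₁' w₂', D.Lang (D.l v) w₁ → D.Lang (D.r v) w₂ →
      D.Lang (D.l v) w₁' → D.Lang (D.r v) w₂' →
      w₁ ++ w₂ = w₁' ++ w₂' → w₁ = w₁' ∧ w₂ = w₂')

end ECS

namespace ECS

variable {S V : Type*}

theorem lang_of_full (D : ECS S V) {T : OTree V} (h : D.Full T) :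
    D.Lang T.root (D.print T) := by
  induction h with
  | leaf h => simpa [ECS.print, OTree.root, h] using ECS.Lang.sym h
  | un h hr _ ih =>
    rcases hr with hr | hr
    · exact ECS.Lang.unionL h (by rwa [hr] at ih)
    · exact ECS.Lang.unionR h (by rwa [hr] at ih)
  | pr h h1 h2 _ _ ih1 ih2 =>
    exact ECS.Lang.prod h (by rwa [h1] at ih1) (by rwa [h2] at ih2)

theorem exists_full (D : ECS S V) {v : V} {w : List S} (h : D.Lang v w) :
    ∃ T : OTree V, D.Full T ∧ T.root = v ∧ D.print T = w := by
  induction h with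
  | sym h => exact ⟨.leaf _, .leaf h, rfl, by simp [ECS.print, h]⟩
  | unionL h _ ih =>
    obtain ⟨T, hT, hr, hp⟩ := ih
    exact ⟨.un _ T, .un h (Or.inl hr) hT, rfl, hp⟩
  | unionR h _ ih =>
    obtain ⟨T, hT, hr, hp⟩ := ih
    exact ⟨.un _ T, .un h (Or.inr hr) hT, rfl, hp⟩
  | prod h _ _ ih1 ih2 =>
    obtain ⟨T1, hT1, hr1, hp1⟩ := ih1
    obtain ⟨T2, hT2, hr2, hp2⟩ := ih2
    exact ⟨.pr _ T1 T2, .pr h hr1 hr2 hT1 hT2, rfl, by simp [ECS.print, hp1, hp2]⟩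

theorem full_inj (D : ECS S V) (hD : D.Unambiguous) :
    ∀ T T' : OTree V, D.Full T → D.Full T' → T.root = T'.root →
      D.print T = D.print T' → T = T' := by
  intro T
  induction T with
  | leaf v =>
    intro T' hT hT' hroot _
    cases hT' with
    | leaf h' => cases hroot; rfl
    | un h' _ _ =>
      cases hT with | leaf h => simp [OTree.root] at hroot; rw [hroot] at h; cases h.symm.trans h'
    | pr h' _ _ _ _ =>
      cases hT with | leaf h => simp [OTree.root] at hroot; rw [hroot] at h; cases h.symm.trans h'
  | un v t ih =>
    intro T' hT hT' hroot hprint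
    cases hT with
    | un h hr ht =>
      cases hT' with
      | leaf h' => simp [OTree.root] at hroot; rw [← hroot] at h'; rw [h'] at h; cases h
      | pr h' _ _ _ _ => simp [OTree.root] at hroot; rw [← hroot] at h'; rw [h'] at h; cases h
      | @un v' t' h' hr' ht' =>
        simp [OTree.root] at hroot
        subst hroot
        have hpt : D.print t = D.print t' := by simpa [ECS.print] using hprint
        have hlt := D.lang_of_full ht
        have hlt' := D.lang_of_full ht'
        have hroots : t.root = t'.root := by
          rcases hr with hr | hr <;> rcases hr' with hr' | hr'
          · rw [hr, hr']
          · exfalso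
            exact hD.1 v h (D.print t) ⟨by rwa [hr] at hlt, by rw [hpt]; rwa [hr'] at hlt'⟩
          · exfalso
            exact hD.1 v h (D.print t) ⟨by rw [hpt]; rwa [hr'] at hlt', by rwa [hr] at hlt⟩
          · rw [hr, hr']
        rw [ih t' ht ht' hroots hpt]
  | pr v t₁ t₂ ih1 ih2 =>
    intro T' hT hT' hroot hprint
    cases hT with
    | pr h h1 h2 ht1 ht2 =>
      cases hT' with
      | leaf h' => simp [OTree.root] at hroot; rw [← hroot] at h'; rw [h'] at h; cases h
      | un h' _ _ => simp [OTree.root] at hroot; rw [← hroot] at h'; rw [h'] at h; cases h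
      | @pr v' t₁' t₂' h' h1' h2' ht1' ht2' =>
        simp [OTree.root] at hroot
        subst hroot
        have hl1 := D.lang_of_full ht1
        have hl2 := D.lang_of_full ht2
        have hl1' := D.lang_of_full ht1'
        have hl2' := D.lang_of_full ht2'
        rw [h1] at hl1; rw [h2] at hl2; rw [h1'] at hl1'; rw [h2'] at hl2'
        have hp : D.print t₁ ++ D.print t₂ = D.print t₁' ++ D.print t₂' := by
          simpa [ECS.print] using hprint
        obtain ⟨e1, e2⟩ := hD.2 v h _ _ _ _ hl1 hl2 hl1' hl2' hp
        rw [ih1 t₁' ht1 ht1' (by rw [h1, h1']) e1,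
            ih2 t₂' ht2 ht2' (by rw [h2, h2']) e2]

end ECS

/-- In an unambiguous ECS, `print` is a bijection from the full output trees rooted
at `v` onto the set `L_D(v)`; in particular the number of full output trees rooted
at `v` equals `|L_D(v)|`. -/
theorem ecs_print_bijOn {S V : Type*} (D : ECS S V) (hD : D.Unambiguous) (v : V) :
    Set.BijOn (fun T => D.print T) {T : OTree V | D.Full T ∧ T.root = v}
      {w | D.Lang v w} := by
  refine ⟨?_, ?_, ?_⟩
  · rintro T ⟨hT, hr⟩
    have := D.lang_of_full hT
    rwa [hr] at this
  · rintro T ⟨hT, hr⟩ T' ⟨hT', hr'⟩ hp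
    exact D.full_inj hD T T' hT hT' (hr.trans hr'.symm) hp
  · rintro w hw
    obtain ⟨T, hT, hr, hp⟩ := D.exists_full hw
    exact ⟨T, ⟨hT, hr⟩, hp⟩
end

section
/- Applying the union gadget to two safe nodes of a 2-bounded ECS yields a 2-bounded ECS and the produced node is safe: if v3 and v4 are safe union nodes of a 2-bounded ECS D, and D' extends D with fresh union nodes v', v'', v* where ℓ(v')=ℓ(v3), r(v')=v'', ℓ(v'')=ℓ(v4), r(v'')=v*, ℓ(v*)=r(v3), r(v*)=r(v4), then L_{D'}(v') = L_D(v3) ∪ L_D(v4), D' is 2-bounded, and v' is safe in D'. -/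
namespace ECS

variable {S V : Type*}

/-- The (left) output-depth of a node: `0` for leaves and product nodes, and one
more than the output-depth of the left child for union nodes. -/
def odepth (D : ECS S V) (v : V) : ℕ :=
  match h : D.label v with
  | .union => D.odepth (D.l v) + 1
  | .sym _ => 0
  | .prod => 0
termination_by D.rank v
decreasing_by exact D.rank_l v (by rw [h]; trivial)

/-- An ECS is `k`-bounded if every node has output-depth at most `k`. -/
def kBounded (D : ECS S V) (k : ℕ) : Prop :=
  ∀ v, D.odepth v ≤ k

open Classical in
/-- The tilt operation on output trees: bypass every union node whose child is
rooted at the right child. -/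
noncomputable def tilt (D : ECS S V) : OTree V → OTree V
  | .leaf v => .leaf v
  | .un v t => if t.root = D.l v then .un v (D.tilt t) else D.tilt t
  | .pr v t₁ t₂ => .pr v (D.tilt t₁) (D.tilt t₂)

/-- Output trees of an ECS (not necessarily full). -/
inductive IsOTree (D : ECS S V) : OTree V → Prop
  | leaf {v : V} {a : S} : D.label v = ECSLabel.sym a → IsOTree D (.leaf v)
  | un {v : V} {t : OTree V} : D.label v = ECSLabel.union →
      IsOTree D t → IsOTree D (.un v t)
  | pr {v : V} {t₁ t₂ : OTree V} : D.label v = ECSLabel.prod →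
      IsOTree D t₁ → IsOTree D t₂ → IsOTree D (.pr v t₁ t₂)

end ECS

namespace ECS

variable {S V : Type*}

/-- A node is safe if its output-depth is at most `1`, and when it equals `1` the
output-depth of its right child is also at most `1`. -/
def Safe (D : ECS S V) (v : V) : Prop :=
  D.odepth v ≤ 1 ∧ (D.odepth v = 1 → D.odepth (D.r v) ≤ 1)

end ECS

namespace ECS
variable {S V : Type*}

lemma odepth_union' {D : ECS S V} {v : V} (h : D.label v = ECSLabel.union) :
    D.odepth v = D.odepth (D.l v) + 1 := by
  rw [odepth]; split <;> simp_all

lemma odepth_sym' {D : ECS S V} {v : V} {a : S} (h : D.label v = ECSLabel.sym a) :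
    D.odepth v = 0 := by
  rw [odepth]; split <;> simp_all

lemma odepth_prod' {D : ECS S V} {v : V} (h : D.label v = ECSLabel.prod) :
    D.odepth v = 0 := by
  rw [odepth]; split <;> simp_all

end ECS
/-- The union gadget: extending a `2`-bounded ECS `D` with fresh union nodes
`v' = inr 0`, `v'' = inr 1`, `v* = inr 2` wired as `ℓ(v') = ℓ(v₃)`, `r(v') = v''`,
`ℓ(v'') = ℓ(v₄)`, `r(v'') = v*`, `ℓ(v*) = r(v₃)`, `r(v*) = r(v₄)` yields
`L(v') = L(v₃) ∪ L(v₄)`, a `2`-bounded ECS, and a safe node `v'`. -/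
theorem ecs_union_gadget {S V : Type*} (D : ECS S V) (v₃ v₄ : V)
    (hbound : D.kBounded 2)
    (h₃ : D.label v₃ = ECSLabel.union) (h₄ : D.label v₄ = ECSLabel.union)
    (hs₃ : D.Safe v₃) (hs₄ : D.Safe v₄)
    (D' : ECS S (V ⊕ Fin 3))
    (hlab : ∀ v : V, D'.label (Sum.inl v) = D.label v)
    (hl : ∀ v : V, D'.l (Sum.inl v) = Sum.inl (D.l v))
    (hr : ∀ v : V, D'.r (Sum.inl v) = Sum.inl (D.r v))
    (hlab' : ∀ i : Fin 3, D'.label (Sum.inr i) = ECSLabel.union)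
    (hl0 : D'.l (Sum.inr 0) = Sum.inl (D.l v₃)) (hr0 : D'.r (Sum.inr 0) = Sum.inr 1)
    (hl1 : D'.l (Sum.inr 1) = Sum.inl (D.l v₄)) (hr1 : D'.r (Sum.inr 1) = Sum.inr 2)
    (hl2 : D'.l (Sum.inr 2) = Sum.inl (D.r v₃)) (hr2 : D'.r (Sum.inr 2) = Sum.inl (D.r v₄)) :
    {w | D'.Lang (Sum.inr 0) w} = {w | D.Lang v₃ w} ∪ {w | D.Lang v₄ w} ∧
    D'.kBounded 2 ∧
    D'.Safe (Sum.inr 0) := by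
  -- language transfer
  have fwd : ∀ v w, D.Lang v w → D'.Lang (Sum.inl v) w := by
    intro v w h
    induction h with
    | sym hs => exact .sym (by rw [hlab]; exact hs)
    | unionL hu _ ih => exact .unionL (by rw [hlab]; exact hu) (by rw [hl]; exact ih)
    | unionR hu _ ih => exact .unionR (by rw [hlab]; exact hu) (by rw [hr]; exact ih)
    | prod hp _ _ ih₁ ih₂ =>
        exact .prod (by rw [hlab]; exact hp) (by rw [hl]; exact ih₁) (by rw [hr]; exact ih₂)
  have bwd : ∀ u w, D'.Lang u w → ∀ v, u = Sum.inl v → D.Lang v w := by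
    intro u w h
    induction h with
    | sym hs => rintro v rfl; exact .sym (by rw [hlab] at hs; exact hs)
    | unionL hu _ ih =>
        rintro v rfl; exact .unionL (by rw [hlab] at hu; exact hu) (ih _ (hl v))
    | unionR hu _ ih =>
        rintro v rfl; exact .unionR (by rw [hlab] at hu; exact hu) (ih _ (hr v))
    | prod hp _ _ ih₁ ih₂ =>
        rintro v rfl
        exact .prod (by rw [hlab] at hp; exact hp) (ih₁ _ (hl v)) (ih₂ _ (hr v))
  -- odepth transfer
  have od : ∀ n v, D.rank v ≤ n → D'.odepth (Sum.inl v) = D.odepth v := by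
    intro n
    induction n with
    | zero =>
        intro v hv
        cases hlb : D.label v with
        | sym a => rw [ECS.odepth_sym' hlb, ECS.odepth_sym' (by rw [hlab]; exact hlb)]
        | prod => rw [ECS.odepth_prod' hlb, ECS.odepth_prod' (by rw [hlab]; exact hlb)]
        | union =>
            have := D.rank_l v (by rw [hlb]; trivial)
            omega
    | succ n ih =>
        intro v hv
        cases hlb : D.label v with
        | sym a => rw [ECS.odepth_sym' hlb, ECS.odepth_sym' (by rw [hlab]; exact hlb)]
        | prod => rw [ECS.odepth_prod' hlb, ECS.odepth_prod' (by rw [hlab]; exact hlb)]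
        | union =>
            have hlt := D.rank_l v (by rw [hlb]; trivial)
            rw [ECS.odepth_union' hlb, ECS.odepth_union' (by rw [hlab]; exact hlb), hl,
              ih _ (by omega)]
  have od' : ∀ v, D'.odepth (Sum.inl v) = D.odepth v := fun v => od _ v le_rfl
  -- basic odepth facts about v₃, v₄
  have e₃ := ECS.odepth_union' h₃
  have e₄ := ECS.odepth_union' h₄
  have hl₃0 : D.odepth (D.l v₃) = 0 := by have := hs₃.1; omega
  have hl₄0 : D.odepth (D.l v₄) = 0 := by have := hs₄.1; omega
  have hr₃ : D.odepth (D.r v₃) ≤ 1 := hs₃.2 (by omega)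
  have hr₄ : D.odepth (D.r v₄) ≤ 1 := hs₄.2 (by omega)
  -- odepths of the fresh nodes
  have od0 : D'.odepth (Sum.inr 0) = 1 := by
    rw [ECS.odepth_union' (hlab' 0), hl0, od', hl₃0]
  have od1 : D'.odepth (Sum.inr 1) = 1 := by
    rw [ECS.odepth_union' (hlab' 1), hl1, od', hl₄0]
  have od2 : D'.odepth (Sum.inr 2) ≤ 2 := by
    rw [ECS.odepth_union' (hlab' 2), hl2, od']; omega
  refine ⟨?_, ?_, ?_⟩
  · ext w
    simp only [Set.mem_setOf_eq, Set.mem_union]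
    constructor
    · intro h
      cases h with
      | sym hs => rw [hlab' 0] at hs; cases hs
      | unionL _ h => rw [hl0] at h; exact Or.inl (.unionL h₃ (bwd _ _ h _ rfl))
      | prod hp => rw [hlab' 0] at hp; cases hp
      | unionR _ h =>
          rw [hr0] at h
          cases h with
          | sym hs => rw [hlab' 1] at hs; cases hs
          | unionL _ h => rw [hl1] at h; exact Or.inr (.unionL h₄ (bwd _ _ h _ rfl))
          | prod hp => rw [hlab' 1] at hp; cases hp
          | unionR _ h =>
              rw [hr1] at h
              cases h with
              | sym hs => rw [hlab' 2] at hs; cases hs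
              | unionL _ h => rw [hl2] at h; exact Or.inl (.unionR h₃ (bwd _ _ h _ rfl))
              | unionR _ h => rw [hr2] at h; exact Or.inr (.unionR h₄ (bwd _ _ h _ rfl))
              | prod hp => rw [hlab' 2] at hp; cases hp
    · intro h
      cases h with
      | inl h =>
          cases h with
          | sym hs => rw [h₃] at hs; cases hs
          | unionL _ h => exact .unionL (hlab' 0) (by rw [hl0]; exact fwd _ _ h)
          | unionR _ h =>
              refine .unionR (hlab' 0) ?_
              rw [hr0]
              refine .unionR (hlab' 1) ?_
              rw [hr1]
              exact .unionL (hlab' 2) (by rw [hl2]; exact fwd _ _ h)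
          | prod hp => rw [h₃] at hp; cases hp
      | inr h =>
          cases h with
          | sym hs => rw [h₄] at hs; cases hs
          | unionL _ h =>
              exact .unionR (hlab' 0) (by
                rw [hr0]; exact .unionL (hlab' 1) (by rw [hl1]; exact fwd _ _ h))
          | unionR _ h =>
              refine .unionR (hlab' 0) ?_
              rw [hr0]
              refine .unionR (hlab' 1) ?_
              rw [hr1]
              exact .unionR (hlab' 2) (by rw [hr2]; exact fwd _ _ h)
          | prod hp => rw [h₄] at hp; cases hp
  · intro u
    cases u with
    | inl v => rw [od']; exact hbound v
    | inr i =>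
        fin_cases i
        · show D'.odepth (Sum.inr 0) ≤ 2; rw [od0]; omega
        · show D'.odepth (Sum.inr 1) ≤ 2; rw [od1]; omega
        · show D'.odepth (Sum.inr 2) ≤ 2; exact od2
  · exact ⟨by rw [od0], fun _ => by rw [hr0, od1]⟩
end
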